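/- Let π be a density on (0,∞) satisfying A1 and A2, let t ≥ 1 be an integer, and suppose ∫_0^∞ α^t π(α) dα < ∞. Then for every ε > 0 there exists M > 0 such that for every n ≥ 1, M · ∫_0^ε (α^t/α^{(n)}) π(α) dα ≥ ∫_ε^∞ (α^t/α^{(n)}) π(α) dα. -/

import Mathlib

open MeasureTheory Filter Topology
open scoped Classical BigOperators ENNReal

noncomputable section

/-- Ascending factorial `α^{(n)} = α (α+1) ⋯ (α+n−1)`. -/
def ascFactorial (α : ℝ) (n : ℕ) : ℝ := ∏ i ∈ Finset.range n, (α + (i : ℝ))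

/-- (A1): `π` is a probability density on `(0,∞)`. -/
def IsPriorDensity (π : ℝ → ℝ) : Prop :=
  Measurable π ∧ (∀ α, 0 ≤ π α) ∧ (∫ α in Set.Ioi (0:ℝ), π α) = 1

/-- (A2): polynomial behaviour of `π` near the origin, with constants `ε ∈ (0,1)`,
`δ > 0`, `β > 0`. -/
def PolyAtZero (π : ℝ → ℝ) (ε δ β : ℝ) : Prop :=
  ε ∈ Set.Ioo (0:ℝ) 1 ∧ 0 < δ ∧ 0 < β ∧
    ∀ α ∈ Set.Ioo (0:ℝ) ε, δ⁻¹ * α ^ β ≤ π α ∧ π α ≤ δ * α ^ β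

/-- The lower incomplete Gamma function `γ(x,y) = ∫_0^y z^{x−1} e^{−z} dz`. -/
def lowerGamma (x y : ℝ) : ℝ := ∫ z in (0:ℝ)..y, z ^ (x - 1) * Real.exp (-z)

/-- `C(n,t,s) = (∫_0^∞ α^s/α^{(n)} π dα)/(∫_0^∞ α^t/α^{(n)} π dα)`. -/
def Cratio (π : ℝ → ℝ) (n t s : ℕ) : ℝ :=
  (∫ α in Set.Ioi (0:ℝ), α ^ s / ascFactorial α n * π α) /
  (∫ α in Set.Ioi (0:ℝ), α ^ t / ascFactorial α n * π α)

lemma asc_pos {α : ℝ} (hα : 0 < α) (n : ℕ) : 0 < ascFactorial α n := by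
  unfold ascFactorial
  exact Finset.prod_pos fun i _ => by positivity

lemma asc_mono {a b : ℝ} (ha : 0 ≤ a) (hab : a ≤ b) (n : ℕ) :
    ascFactorial a n ≤ ascFactorial b n := by
  unfold ascFactorial
  exact Finset.prod_le_prod (fun i _ => by positivity) (fun i _ => by linarith)

lemma asc_measurable (n : ℕ) : Measurable fun α : ℝ => ascFactorial α n := by
  unfold ascFactorial
  exact Finset.measurable_prod _ fun i _ => measurable_id.add_const _

lemma asc_ge_self {α : ℝ} (hα : 0 ≤ α) {n : ℕ} (hn : 1 ≤ n) :
    α ≤ ascFactorial α n := by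
  have h0 : (0:ℕ) ∈ Finset.range n := Finset.mem_range.2 hn
  have hprod : (1:ℝ) ≤ ∏ i ∈ (Finset.range n).erase 0, (α + i) := by
    have : ∏ i ∈ (Finset.range n).erase 0, (1:ℝ) ≤ ∏ i ∈ (Finset.range n).erase 0, (α + i) := by
      refine Finset.prod_le_prod (fun i _ => zero_le_one) fun i hi => ?_
      have hi1 : 1 ≤ i := Nat.one_le_iff_ne_zero.2 (Finset.ne_of_mem_erase hi)
      have : (1:ℝ) ≤ i := by exact_mod_cast hi1
      linarith
    simpa using this
  have := mul_le_mul_of_nonneg_left hprod hα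
  unfold ascFactorial
  rw [← Finset.mul_prod_erase _ _ h0]
  simpa using this

/-- Lemma S.3 of the paper.
Let `π` satisfy (A1)–(A2), let `t ≥ 1` and suppose `∫_0^∞ α^t π(α) dα < ∞`.  Then for
every `ε > 0` there is `M > 0` such that for every `n ≥ 1`,
`M ∫_0^ε α^t/α^{(n)} π(α) dα ≥ ∫_ε^∞ α^t/α^{(n)} π(α) dα`. -/
theorem prior_tail_integral_domination
    (π : ℝ → ℝ) (ε₀ δ β : ℝ) (t : ℕ)
    (hA1 : IsPriorDensity π) (hA2 : PolyAtZero π ε₀ δ β) (ht : 1 ≤ t)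
    (hmom : IntegrableOn (fun α => α ^ t * π α) (Set.Ioi (0:ℝ))) :
    ∀ ε : ℝ, 0 < ε → ∃ M : ℝ, 0 < M ∧
      ∀ n : ℕ, 1 ≤ n →
        (∫ α in Set.Ioi ε, α ^ t / ascFactorial α n * π α)
          ≤ M * ∫ α in Set.Ioo (0:ℝ) ε, α ^ t / ascFactorial α n * π α := by
  obtain ⟨hπm, hπ0, hπ1⟩ := hA1
  obtain ⟨⟨hε₀0, hε₀1⟩, hδ, hβ, hpoly⟩ := hA2
  obtain ⟨s, rfl⟩ : ∃ s, t = s + 1 := ⟨t - 1, (Nat.succ_pred_eq_of_pos ht).symm⟩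
  have hπint : IntegrableOn π (Set.Ioi (0:ℝ)) := by
    by_contra h
    rw [MeasureTheory.integral_undef h] at hπ1
    norm_num at hπ1
  intro ε hε
  set ε₁ : ℝ := min ε ε₀ with hε₁def
  have hε₁0 : 0 < ε₁ := lt_min hε hε₀0
  have hε₁ε : ε₁ ≤ ε := min_le_left _ _
  have hε₁ε₀ : ε₁ ≤ ε₀ := min_le_right _ _
  have hhalf : 0 < ε₁ / 2 := by positivity
  set c : ℝ := δ⁻¹ * ((ε₁ / 2) ^ (s + 1) * (ε₁ / 2) ^ β) with hcdef
  have hc : 0 < c := by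
    have : (0:ℝ) < (ε₁ / 2) ^ β := Real.rpow_pos_of_pos hhalf β
    positivity
  set C : ℝ := ∫ α in Set.Ioi (0:ℝ), α ^ (s + 1) * π α with hCdef
  have hC0 : 0 ≤ C :=
    setIntegral_nonneg measurableSet_Ioi fun α hα =>
      mul_nonneg (pow_nonneg (le_of_lt hα) _) (hπ0 α)
  set M : ℝ := max 1 (C / (c * (ε₁ / 2))) with hMdef
  have hM1 : 1 ≤ M := le_max_left _ _
  refine ⟨M, lt_of_lt_of_le one_pos hM1, ?_⟩
  intro n hn
  set f : ℝ → ℝ := fun α => α ^ (s + 1) / ascFactorial α n * π α with hfdef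
  have hfm : Measurable f :=
    ((measurable_id.pow_const _).div (asc_measurable n)).mul hπm
  have hf0 : ∀ α ∈ Set.Ioi (0:ℝ), 0 ≤ f α := fun α hα => by
    have h1 := asc_pos hα n
    have h2 := hπ0 α
    have hα' : (0:ℝ) < α := hα
    show 0 ≤ α ^ (s + 1) / ascFactorial α n * π α
    positivity
  have hascε : 0 < ascFactorial ε n := asc_pos hε n
  have hascε₁ : 0 < ascFactorial ε₁ n := asc_pos hε₁0 n
  -- pointwise bound on the tail
  have hub : ∀ α ∈ Set.Ioi ε, f α ≤ (ascFactorial ε n)⁻¹ * (α ^ (s + 1) * π α) := by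
    intro α hα
    have hα0 : (0:ℝ) < α := lt_trans hε hα
    have hmono : ascFactorial ε n ≤ ascFactorial α n := asc_mono hε.le (le_of_lt hα) n
    have h1 : α ^ (s + 1) / ascFactorial α n ≤ α ^ (s + 1) / ascFactorial ε n := by
      gcongr

    calc f α = α ^ (s + 1) / ascFactorial α n * π α := rfl
      _ ≤ α ^ (s + 1) / ascFactorial ε n * π α := mul_le_mul_of_nonneg_right h1 (hπ0 α)
      _ = (ascFactorial ε n)⁻¹ * (α ^ (s + 1) * π α) := by ring
  have hgint : IntegrableOn (fun α => (ascFactorial ε n)⁻¹ * (α ^ (s + 1) * π α))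
      (Set.Ioi ε) := (hmom.mono_set (Set.Ioi_subset_Ioi hε.le)).const_mul _
  have hftail : IntegrableOn f (Set.Ioi ε) := by
    refine hgint.mono' hfm.aestronglyMeasurable ?_
    refine (ae_restrict_iff' measurableSet_Ioi).2 (Filter.Eventually.of_forall fun α hα => ?_)
    rw [Real.norm_eq_abs, abs_of_nonneg (hf0 α (lt_trans hε hα))]
    exact hub α hα
  have htail_le : (∫ α in Set.Ioi ε, f α) ≤ C * (ascFactorial ε n)⁻¹ := by
    have h1 : (∫ α in Set.Ioi ε, f α)
        ≤ ∫ α in Set.Ioi ε, (ascFactorial ε n)⁻¹ * (α ^ (s + 1) * π α) :=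
      setIntegral_mono_on hftail hgint measurableSet_Ioi hub
    have h2 : (∫ α in Set.Ioi ε, α ^ (s + 1) * π α) ≤ C := by
      refine setIntegral_mono_set hmom ?_
        (HasSubset.Subset.eventuallyLE (Set.Ioi_subset_Ioi hε.le))
      exact (ae_restrict_iff' measurableSet_Ioi).2 (Filter.Eventually.of_forall fun α hα =>
        mul_nonneg (pow_nonneg (le_of_lt hα) _) (hπ0 α))
    rw [integral_const_mul] at h1
    calc (∫ α in Set.Ioi ε, f α)
        ≤ (ascFactorial ε n)⁻¹ * ∫ α in Set.Ioi ε, α ^ (s + 1) * π α := h1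
      _ ≤ (ascFactorial ε n)⁻¹ * C := mul_le_mul_of_nonneg_left h2 (inv_nonneg.2 hascε.le)
      _ = C * (ascFactorial ε n)⁻¹ := mul_comm _ _
  -- integrability near zero
  have hB : IntegrableOn (fun α => (max 1 ε) ^ s * π α) (Set.Ioo (0:ℝ) ε) :=
    (hπint.mono_set Set.Ioo_subset_Ioi_self).const_mul _
  have hlb : ∀ α ∈ Set.Ioo (0:ℝ) ε, f α ≤ (max 1 ε) ^ s * π α := by
    rintro α ⟨hα0, hαε⟩
    have hasc := asc_pos hα0 n
    have h1 : α ^ (s + 1) / ascFactorial α n ≤ α ^ s := by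
      rw [div_le_iff₀ hasc]
      calc α ^ (s + 1) = α ^ s * α := pow_succ α s
        _ ≤ α ^ s * ascFactorial α n :=
            mul_le_mul_of_nonneg_left (asc_ge_self hα0.le hn) (pow_nonneg hα0.le s)
    have h2 : α ^ s ≤ (max 1 ε) ^ s :=
      pow_le_pow_left₀ hα0.le (le_trans hαε.le (le_max_right 1 ε)) s
    calc f α = α ^ (s + 1) / ascFactorial α n * π α := rfl
      _ ≤ (max 1 ε) ^ s * π α :=
          mul_le_mul_of_nonneg_right (le_trans h1 h2) (hπ0 α)
  have hIoo : IntegrableOn f (Set.Ioo (0:ℝ) ε) := by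
    refine hB.mono' hfm.aestronglyMeasurable ?_
    refine (ae_restrict_iff' measurableSet_Ioo).2 (Filter.Eventually.of_forall fun α hα => ?_)
    rw [Real.norm_eq_abs, abs_of_nonneg (hf0 α hα.1)]
    exact hlb α hα
  -- the small interval J
  have hJsub : Set.Ioo (ε₁ / 2) ε₁ ⊆ Set.Ioo (0:ℝ) ε := fun α hα =>
    ⟨lt_trans hhalf hα.1, lt_of_lt_of_le hα.2 hε₁ε⟩
  have hIJ : IntegrableOn f (Set.Ioo (ε₁ / 2) ε₁) := hIoo.mono_set hJsub
  have hptJ : ∀ α ∈ Set.Ioo (ε₁ / 2) ε₁, c / ascFactorial ε₁ n ≤ f α := by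
    rintro α ⟨ha1, ha2⟩
    have hα0 : 0 < α := lt_trans hhalf ha1
    have hπl : δ⁻¹ * α ^ β ≤ π α := (hpoly α ⟨hα0, lt_of_lt_of_le ha2 hε₁ε₀⟩).1
    have h1 : (ε₁ / 2) ^ (s + 1) / ascFactorial ε₁ n ≤ α ^ (s + 1) / ascFactorial α n :=
      div_le_div₀ (pow_nonneg hα0.le _) (pow_le_pow_left₀ hhalf.le ha1.le _)
        (asc_pos hα0 n) (asc_mono hα0.le ha2.le n)
    have h2 : δ⁻¹ * (ε₁ / 2) ^ β ≤ π α :=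
      le_trans (mul_le_mul_of_nonneg_left (Real.rpow_le_rpow hhalf.le ha1.le hβ.le)
        (inv_nonneg.2 hδ.le)) hπl
    have hbnn : 0 ≤ α ^ (s + 1) / ascFactorial α n :=
      div_nonneg (pow_nonneg hα0.le _) (asc_pos hα0 n).le
    have h3 := mul_le_mul h1 h2
      (mul_nonneg (inv_nonneg.2 hδ.le) (Real.rpow_nonneg hhalf.le β)) hbnn
    calc c / ascFactorial ε₁ n
        = (ε₁ / 2) ^ (s + 1) / ascFactorial ε₁ n * (δ⁻¹ * (ε₁ / 2) ^ β) := by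
          rw [hcdef]; ring
      _ ≤ α ^ (s + 1) / ascFactorial α n * π α := h3
      _ = f α := rfl
  have hvol : (volume (Set.Ioo (ε₁ / 2) ε₁)).toReal = ε₁ / 2 := by
    rw [Real.volume_Ioo, ENNReal.toReal_ofReal (by linarith)]
    ring
  have hJint : (volume (Set.Ioo (ε₁ / 2) ε₁)).toReal • (c / ascFactorial ε₁ n)
      ≤ ∫ α in Set.Ioo (ε₁ / 2) ε₁, f α := by
    rw [← measureReal_def, ← setIntegral_const]
    exact setIntegral_mono_on (integrableOn_const measure_Ioo_lt_top.ne) hIJ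
      measurableSet_Ioo hptJ
  have hL : ε₁ / 2 * (c / ascFactorial ε₁ n) ≤ ∫ α in Set.Ioo (0:ℝ) ε, f α := by
    calc ε₁ / 2 * (c / ascFactorial ε₁ n) ≤ ∫ α in Set.Ioo (ε₁ / 2) ε₁, f α := by
          have h := hJint
          rw [hvol, smul_eq_mul] at h
          exact h
      _ ≤ ∫ α in Set.Ioo (0:ℝ) ε, f α :=
          setIntegral_mono_set hIoo
            ((ae_restrict_iff' measurableSet_Ioo).2
              (Filter.Eventually.of_forall fun α hα => hf0 α hα.1))
            (HasSubset.Subset.eventuallyLE hJsub)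
  have hMC : C ≤ M * (c * (ε₁ / 2)) := by
    have h := le_max_right 1 (C / (c * (ε₁ / 2)))
    have hpos : 0 < c * (ε₁ / 2) := by positivity
    rw [div_le_iff₀ hpos] at h
    exact h
  have hinv : (ascFactorial ε n)⁻¹ ≤ (ascFactorial ε₁ n)⁻¹ :=
    inv_anti₀ hascε₁ (asc_mono hε₁0.le hε₁ε n)
  calc (∫ α in Set.Ioi ε, f α) ≤ C * (ascFactorial ε n)⁻¹ := htail_le
    _ ≤ C * (ascFactorial ε₁ n)⁻¹ := mul_le_mul_of_nonneg_left hinv hC0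
    _ ≤ (M * (c * (ε₁ / 2))) * (ascFactorial ε₁ n)⁻¹ :=
        mul_le_mul_of_nonneg_right hMC (inv_nonneg.2 hascε₁.le)
    _ = M * (ε₁ / 2 * (c / ascFactorial ε₁ n)) := by ring
    _ ≤ M * ∫ α in Set.Ioo (0:ℝ) ε, f α :=
        mul_le_mul_of_nonneg_left hL (le_trans zero_le_one hM1)
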